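/- If f : ℝ → ℝ is m times continuously differentiable, then for any real y_1, ..., y_m and x, the iterated difference Δ_{y_1,...,y_m} f(x) equals y_1 ⋯ y_m times the integral over the unit cube [0,1]^m of f^{(m)}(x + y_1 u_1 + ... + y_m u_m) du_1 ⋯ du_m. -/

import Mathlib

open Finset MeasureTheory

/-- The difference operator `Δ_y f(x) = f(x+y) - f(x)`. -/
def diffOp (y : ℝ) (f : ℝ → ℝ) : ℝ → ℝ := fun x => f (x + y) - f x

/-- The iterated difference operator `Δ_{y_1} ∘ ⋯ ∘ Δ_{y_m}`. -/
def iterDiff : (m : ℕ) → (Fin m → ℝ) → (ℝ → ℝ) → (ℝ → ℝ)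
  | 0, _, f => f
  | m + 1, y, f => diffOp (y 0) (iterDiff m (fun i => y i.succ) f)

lemma ftc_step (g : ℝ → ℝ) (hg : Differentiable ℝ g) (hg' : Continuous (deriv g)) (b c : ℝ) :
    g (b + c) - g b = c * ∫ t in Set.Icc (0:ℝ) 1, deriv g (b + c * t) := by
  have hd : ∀ t ∈ Set.uIcc (0:ℝ) 1, HasDerivAt (fun t => g (b + c * t)) (c * deriv g (b + c * t)) t := by
    intro t _
    have h1 : HasDerivAt (fun t : ℝ => b + c * t) c t := by
      simpa using ((hasDerivAt_id t).const_mul c).const_add b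
    have h2 := (hg (b + c * t)).hasDerivAt
    simpa [mul_comm, Function.comp_def] using h2.comp t h1
  have hcont : ContinuousOn (fun t => c * deriv g (b + c * t)) (Set.uIcc (0:ℝ) 1) :=
    (continuous_const.mul (hg'.comp (continuous_const.add (continuous_const.mul continuous_id)))).continuousOn
  have := intervalIntegral.integral_eq_sub_of_hasDerivAt hd (hcont.intervalIntegrable)
  rw [intervalIntegral.integral_of_le (by norm_num : (0:ℝ) ≤ 1)] at this
  rw [← MeasureTheory.integral_Icc_eq_integral_Ioc] at this
  rw [MeasureTheory.integral_const_mul] at this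
  simpa using this.symm

lemma cube_succ {m : ℕ} (F : (Fin (m+1) → ℝ) → ℝ) (hF : Continuous F) :
    ∫ u in Set.Icc (0 : Fin (m+1) → ℝ) 1, F u
      = ∫ v in Set.Icc (0 : Fin m → ℝ) 1, ∫ t in Set.Icc (0:ℝ) 1, F ((0 : Fin (m+1)).insertNth t v) := by
  set e := (MeasurableEquiv.piFinSuccAbove (fun _ : Fin (m+1) => ℝ) 0) with he
  have hmp : MeasurePreserving e.symm (volume.prod volume) volume :=
    (volume_preserving_piFinSuccAbove (fun _ : Fin (m+1) => ℝ) 0).symm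
  have hes : ∀ p : ℝ × (Fin m → ℝ), e.symm p = (0 : Fin (m+1)).insertNth p.1 p.2 := fun p => rfl
  have h1 := hmp.setIntegral_preimage_emb e.symm.measurableEmbedding F (Set.Icc 0 1)
  have hpre : e.symm ⁻¹' (Set.Icc 0 1)
      = (Set.Icc (0:ℝ) 1) ×ˢ (Set.Icc (0 : Fin m → ℝ) 1) := by
    ext p
    simp only [Set.mem_preimage, hes, Fin.insertNth_mem_Icc, Set.mem_prod]
    rfl
  rw [hpre] at h1
  rw [← h1]
  simp only [hes]
  have hswap : MeasurePreserving (Prod.swap : (Fin m → ℝ) × ℝ → ℝ × (Fin m → ℝ))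
      (volume.prod volume) (volume.prod volume) := Measure.measurePreserving_swap
  have h2 := hswap.setIntegral_preimage_emb MeasurableEquiv.prodComm.measurableEmbedding
    (fun p : ℝ × (Fin m → ℝ) => F ((0 : Fin (m+1)).insertNth p.1 p.2))
    ((Set.Icc (0:ℝ) 1) ×ˢ (Set.Icc (0 : Fin m → ℝ) 1))
  have hpre2 : (Prod.swap : (Fin m → ℝ) × ℝ → ℝ × (Fin m → ℝ)) ⁻¹'
      ((Set.Icc (0:ℝ) 1) ×ˢ (Set.Icc (0 : Fin m → ℝ) 1))
      = (Set.Icc (0 : Fin m → ℝ) 1) ×ˢ (Set.Icc (0:ℝ) 1) := by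
    ext p; simp [Prod.le_def]; tauto
  rw [hpre2] at h2
  rw [← h2]
  apply setIntegral_prod
  apply ContinuousOn.integrableOn_compact (isCompact_Icc.prod isCompact_Icc)
  apply Continuous.continuousOn
  show Continuous fun z : (Fin m → ℝ) × ℝ => F (Fin.insertNth 0 z.2 z.1)
  exact hF.comp (Continuous.finInsertNth (A := fun _ : Fin (m+1) => ℝ) 0 continuous_snd continuous_fst)

theorem iterDiff_eq_integral (m : ℕ) (f : ℝ → ℝ) (hf : ContDiff ℝ m f)
    (y : Fin m → ℝ) (x : ℝ) :
    iterDiff m y f x = (∏ i, y i) *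
      ∫ u in Set.Icc (0 : Fin m → ℝ) 1, iteratedDeriv m f (x + ∑ i, y i * u i) := by
  induction m generalizing x with
  | zero =>
    simp [iterDiff, Measure.real, Real.volume_Icc_pi]
  | succ m ih =>
    have hfm : ContDiff ℝ (m : ℕ∞) f := hf.of_le (by exact_mod_cast Nat.le_succ m)
    set g := iteratedDeriv m f with hg
    have hgc : Continuous g := hf.continuous_iteratedDeriv m (by exact_mod_cast Nat.le_succ m)
    have hgd : Differentiable ℝ g := hf.differentiable_iteratedDeriv m (by exact_mod_cast Nat.lt_succ_self m)
    have hDc : Continuous (iteratedDeriv (m+1) f) := hf.continuous_iteratedDeriv (m+1) le_rfl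
    have hderiv : deriv g = iteratedDeriv (m+1) f := (iteratedDeriv_succ).symm
    set S : (Fin m → ℝ) → ℝ := fun v => ∑ i, y i.succ * v i with hS
    have hSc : Continuous S := continuous_finset_sum _ fun i _ => continuous_const.mul (continuous_apply i)
    have hint : ∀ z : ℝ, IntegrableOn (fun v => g (z + S v)) (Set.Icc (0 : Fin m → ℝ) 1) := by
      intro z
      exact ((hgc.comp (continuous_const.add hSc)).continuousOn).integrableOn_compact isCompact_Icc
    have key : iterDiff (m+1) y f x
        = (∏ i : Fin m, y i.succ) * ∫ v in Set.Icc (0 : Fin m → ℝ) 1,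
            (g (x + y 0 + S v) - g (x + S v)) := by
      show iterDiff m (fun i => y i.succ) f (x + y 0) - iterDiff m (fun i => y i.succ) f x = _
      rw [ih hfm (fun i => y i.succ) (x + y 0), ih hfm (fun i => y i.succ) x,
        ← mul_sub, ← integral_sub (hint (x + y 0)) (hint x)]
    rw [key]
    have step2 : ∀ v, g (x + y 0 + S v) - g (x + S v)
        = y 0 * ∫ t in Set.Icc (0:ℝ) 1, iteratedDeriv (m+1) f (x + S v + y 0 * t) := by
      intro v
      have := ftc_step g hgd (hderiv ▸ hDc) (x + S v) (y 0)
      rw [hderiv] at this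
      rw [← this]
      ring_nf
    simp_rw [step2]
    rw [integral_const_mul]
    rw [cube_succ (fun u => iteratedDeriv (m+1) f (x + ∑ i, y i * u i))
      (hDc.comp (continuous_const.add (continuous_finset_sum _ fun i _ => continuous_const.mul (continuous_apply i))))]
    have hins : ∀ (t : ℝ) (v : Fin m → ℝ),
        (∑ i : Fin (m+1), y i * (Fin.insertNth (α := fun _ : Fin (m+1) => ℝ) 0 t v) i) = y 0 * t + S v := by
      intro t v
      simp only [Fin.insertNth_zero']
      rw [Fin.sum_univ_succ]
      simp [hS]
    simp_rw [hins]
    rw [Fin.prod_univ_succ]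
    have : ∀ v t, x + S v + y 0 * t = x + (y 0 * t + S v) := by intros; ring
    simp_rw [this]
    ring
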